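/- Let A be an n×n positive definite Hermitian matrix over ℂ. Then there exists a matrix Q with QAQ* = I whose entries are bounded in absolute value by C(n)·λ_min(A)^{−1/2}, where λ_min(A) is the smallest eigenvalue of A, and such that the image Q*(unit polydisc) contains a polydisc of radius c(n)·(tr A)^{−1/2}, for dimensional constants C(n), c(n). -/

import Mathlib

open scoped ComplexOrder Matrix
open Matrix

/-- Normal coordinates lemma: for a positive definite Hermitian `A` with smallest eigenvalue
`≥ lam`, there is `Q` with `Q A Q* = I`, entries bounded by `C(n)·lam^{−1/2}`, and such that
`Q*` maps the unit polydisc onto a set containing a polydisc of radius `c(n)·(tr A)^{−1/2}`. -/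
theorem stmt_15 (n : ℕ) :
    ∃ C c : ℝ, 0 < C ∧ 0 < c ∧
      ∀ (A : Matrix (Fin n) (Fin n) ℂ), A.PosDef →
        ∀ lam : ℝ, 0 < lam →
          (A - (lam : ℂ) • (1 : Matrix (Fin n) (Fin n) ℂ)).PosSemidef →
          ∃ Q : Matrix (Fin n) (Fin n) ℂ,
            Q * A * Qᴴ = 1 ∧
            (∀ i j, ‖Q i j‖ ≤ C * (Real.sqrt lam)⁻¹) ∧
            {v : Fin n → ℂ | ∀ i, ‖v i‖ < c * (Real.sqrt A.trace.re)⁻¹} ⊆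
              (fun v => Qᴴ.mulVec v) '' {v : Fin n → ℂ | ∀ i, ‖v i‖ < 1} := by
  refine ⟨1, 1 / (n + 1), one_pos, by positivity, ?_⟩
  intro A hA lam hlam hsemi
  set μ : Fin n → ℝ := hA.1.eigenvalues with hμdef
  have hμpos : ∀ i, 0 < μ i := hA.eigenvalues_pos
  -- lower bound on eigenvalues
  have hlow : ∀ i, lam ≤ μ i := by
    intro i
    set v : Fin n → ℂ := ⇑(hA.1.eigenvectorBasis i) with hvdef
    have hv : A *ᵥ v = (μ i : ℂ) • v := by
      simpa using hA.1.mulVec_eigenvectorBasis i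
    have h := hsemi.dotProduct_mulVec_nonneg v
    rw [sub_mulVec, hv, smul_mulVec, one_mulVec, dotProduct_sub, dotProduct_smul,
      dotProduct_smul] at h
    have hnorm : dotProduct (star v) v = 1 := by
      have h1 := hA.1.eigenvectorBasis.orthonormal.1 i
      have := EuclideanSpace.inner_eq_star_dotProduct (hA.1.eigenvectorBasis i)
        (hA.1.eigenvectorBasis i)
      rw [inner_self_eq_norm_sq_to_K, h1] at this
      rw [dotProduct_comm]
      simpa [hvdef] using this.symm
    rw [hnorm, smul_eq_mul, smul_eq_mul, mul_one, mul_one] at h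
    have := (Complex.le_def.mp h).1
    simpa using this
  -- trace
  have htr : A.trace = ∑ i, (μ i : ℂ) := by
    conv_lhs => rw [hA.1.spectral_theorem, Unitary.conjStarAlgAut_apply]
    rw [Matrix.trace_mul_cycle, (Matrix.mem_unitaryGroup_iff').mp (hA.1.eigenvectorUnitary).2,
      one_mul]
    simp [Matrix.trace_diagonal, hμdef]
  have htrre : A.trace.re = ∑ i, μ i := by
    rw [htr]; push_cast; simp
  have hμtr : ∀ i, μ i ≤ A.trace.re := by
    intro i
    rw [htrre]
    exact Finset.single_le_sum (f := μ) (fun j _ => (hμpos j).le) (Finset.mem_univ i)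
  set U : Matrix (Fin n) (Fin n) ℂ := (hA.1.eigenvectorUnitary : Matrix (Fin n) (Fin n) ℂ)
    with hUdef
  have hUmem : U ∈ Matrix.unitaryGroup (Fin n) ℂ := (hA.1.eigenvectorUnitary).2
  set s : Fin n → ℝ := fun i => Real.sqrt (μ i) with hsdef
  have hspos : ∀ i, 0 < s i := fun i => Real.sqrt_pos.mpr (hμpos i)
  set Q : Matrix (Fin n) (Fin n) ℂ := diagonal (fun i => ((s i)⁻¹ : ℂ)) * Uᴴ with hQdef
  have hdiagH : (diagonal (fun i => ((s i)⁻¹ : ℂ)))ᴴ = diagonal (fun i => ((s i)⁻¹ : ℂ)) := by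
    rw [diagonal_conjTranspose]
    have : (star fun i => ((s i)⁻¹ : ℂ)) = fun i => ((s i)⁻¹ : ℂ) := by
      funext i
      rw [Pi.star_apply, star_inv₀, Complex.star_def, Complex.conj_ofReal]
    rw [this]
  have hQH : Qᴴ = U * diagonal (fun i => ((s i)⁻¹ : ℂ)) := by
    rw [hQdef, conjTranspose_mul, hdiagH, conjTranspose_conjTranspose]
  have hdiagA : Uᴴ * A * U = diagonal (fun i => (μ i : ℂ)) := by
    have := hA.1.conjStarAlgAut_star_eigenvectorUnitary
    simp only [Unitary.conjStarAlgAut_apply, star_star, Unitary.coe_star] at this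
    exact this
  refine ⟨Q, ?_, ?_, ?_⟩
  · -- Q A Qᴴ = 1
    rw [hQdef, hQH]
    calc diagonal (fun i => ((s i)⁻¹ : ℂ)) * Uᴴ * A * (U * diagonal (fun i => ((s i)⁻¹ : ℂ)))
        = diagonal (fun i => ((s i)⁻¹ : ℂ)) * (Uᴴ * A * U) *
            diagonal (fun i => ((s i)⁻¹ : ℂ)) := by simp only [Matrix.mul_assoc]
      _ = 1 := by
          rw [hdiagA, diagonal_mul_diagonal, diagonal_mul_diagonal]
          have : (fun i => ((s i)⁻¹ : ℂ) * (μ i : ℂ) * ((s i)⁻¹ : ℂ)) = fun _ => (1 : ℂ) := by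
            funext i
            have hs2 : (s i : ℂ) * (s i : ℂ) = (μ i : ℂ) := by
              rw [← Complex.ofReal_mul, Real.mul_self_sqrt (hμpos i).le]
            have hsne : (s i : ℂ) ≠ 0 := by exact_mod_cast (hspos i).ne'
            rw [← hs2]
            field_simp
          rw [this, diagonal_one]
  · -- entry bound
    intro i j
    rw [hQdef]
    have : (diagonal (fun i => ((s i)⁻¹ : ℂ)) * Uᴴ) i j = ((s i)⁻¹ : ℂ) * Uᴴ i j := by
      rw [diagonal_mul]
    rw [this, norm_mul]
    have hU1 : ‖Uᴴ i j‖ ≤ 1 := by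
      rw [conjTranspose_apply, norm_star]
      exact entry_norm_bound_of_unitary hUmem j i
    have hsn : ‖((s i)⁻¹ : ℂ)‖ = (s i)⁻¹ := by
      rw [norm_inv, Complex.norm_real, Real.norm_eq_abs, abs_of_nonneg (hspos i).le]
    rw [hsn, one_mul]
    calc (s i)⁻¹ * ‖Uᴴ i j‖ ≤ (s i)⁻¹ * 1 := by
          apply mul_le_mul_of_nonneg_left hU1 (inv_nonneg.mpr (hspos i).le)
      _ = (s i)⁻¹ := mul_one _
      _ ≤ (Real.sqrt lam)⁻¹ := by
          apply inv_anti₀ (Real.sqrt_pos.mpr hlam)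
          exact Real.sqrt_le_sqrt (hlow i)
  · -- polydisc inclusion
    intro w hw
    rcases Nat.eq_zero_or_pos n with hn | hn
    · refine ⟨0, ?_, ?_⟩
      · intro i; exact absurd i.2 (by omega)
      · funext i; exact absurd i.2 (by omega)
    have htrpos : 0 < A.trace.re := by
      rw [htrre]
      exact Finset.sum_pos (fun i _ => hμpos i) (Finset.univ_nonempty_iff.mpr
        ⟨⟨0, hn⟩⟩)
    have hstr : 0 < Real.sqrt A.trace.re := Real.sqrt_pos.mpr htrpos
    set u : Fin n → ℂ := (diagonal (fun i => ((s i) : ℂ)) * Uᴴ) *ᵥ w with hudef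
    refine ⟨u, ?_, ?_⟩
    · -- u in unit polydisc
      intro i
      have hui : u i = ((s i : ℂ)) * ∑ j, Uᴴ i j * w j := by
        rw [hudef, ← mulVec_mulVec]
        simp [mulVec, dotProduct, diagonal_apply, ite_mul, zero_mul, Finset.sum_ite_eq]
      rw [hui, norm_mul]
      have h1 : ‖∑ j, Uᴴ i j * w j‖ ≤ ∑ j, ‖w j‖ := by
        calc ‖∑ j, Uᴴ i j * w j‖ ≤ ∑ j, ‖Uᴴ i j * w j‖ := norm_sum_le _ _
          _ ≤ ∑ j, ‖w j‖ := by
              apply Finset.sum_le_sum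
              intro j _
              rw [norm_mul]
              calc ‖Uᴴ i j‖ * ‖w j‖ ≤ 1 * ‖w j‖ := by
                    apply mul_le_mul_of_nonneg_right _ (norm_nonneg _)
                    rw [conjTranspose_apply, norm_star]
                    exact entry_norm_bound_of_unitary hUmem j i
                _ = ‖w j‖ := one_mul _
      have h2 : ∑ j, ‖w j‖ < n * (1 / (n + 1) * (Real.sqrt A.trace.re)⁻¹) := by
        calc ∑ j, ‖w j‖ < ∑ _j : Fin n, (1 / (n + 1) * (Real.sqrt A.trace.re)⁻¹) := by
              apply Finset.sum_lt_sum_of_nonempty (Finset.univ_nonempty_iff.mpr ⟨⟨0, hn⟩⟩)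
              intro j _
              exact hw j
          _ = n * (1 / (n + 1) * (Real.sqrt A.trace.re)⁻¹) := by
              rw [Finset.sum_const, Finset.card_univ, Fintype.card_fin, nsmul_eq_mul]
      have hsnorm : ‖((s i : ℂ))‖ = s i := by
        rw [Complex.norm_real, Real.norm_eq_abs, abs_of_nonneg (hspos i).le]
      rw [hsnorm]
      have hsle : s i ≤ Real.sqrt A.trace.re := Real.sqrt_le_sqrt (hμtr i)
      calc s i * ‖∑ j, Uᴴ i j * w j‖
          ≤ Real.sqrt A.trace.re * ‖∑ j, Uᴴ i j * w j‖ :=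
            mul_le_mul_of_nonneg_right hsle (norm_nonneg _)
        _ ≤ Real.sqrt A.trace.re * ∑ j, ‖w j‖ :=
            mul_le_mul_of_nonneg_left h1 hstr.le
        _ < Real.sqrt A.trace.re * (n * (1 / (n + 1) * (Real.sqrt A.trace.re)⁻¹)) :=
            (mul_lt_mul_iff_right₀ hstr).mpr h2
        _ = n / (n + 1) := by field_simp
        _ < 1 := by
            rw [div_lt_one (by positivity)]
            linarith
    · -- Qᴴ *ᵥ u = w
      show Qᴴ *ᵥ u = w
      rw [hudef, mulVec_mulVec, hQH]
      have : U * diagonal (fun i => ((s i)⁻¹ : ℂ)) * (diagonal (fun i => ((s i) : ℂ)) * Uᴴ)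
          = 1 := by
        calc U * diagonal (fun i => ((s i)⁻¹ : ℂ)) * (diagonal (fun i => ((s i) : ℂ)) * Uᴴ)
            = U * (diagonal (fun i => ((s i)⁻¹ : ℂ)) * diagonal (fun i => ((s i) : ℂ))) * Uᴴ := by
              simp only [Matrix.mul_assoc]
          _ = U * Uᴴ := by
              rw [diagonal_mul_diagonal]
              have : (fun i => ((s i)⁻¹ : ℂ) * ((s i) : ℂ)) = fun _ => (1 : ℂ) := by
                funext i
                rw [inv_mul_cancel₀]
                exact_mod_cast (hspos i).ne'
              rw [this, diagonal_one, mul_one]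
          _ = 1 := (Matrix.mem_unitaryGroup_iff).mp hUmem
      rw [this, one_mulVec]
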